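/- For every real number s, the assignment ψ^s(g)([a : b]) = [r·a + s·y·b : r⁻¹·b], for g = [[r, y], [0, r⁻¹]] in the Borel subgroup G of SL(2, ℝ), is well defined on the real projective line ℝP¹ (it is induced by the invertible linear map (a, b) ↦ (r·a + s·y·b, r⁻¹·b) of ℝ²), each ψ^s(g) is a bijection of ℝP¹, and ψ^s : G → Perm(ℝP¹) is a group homomorphism, i.e. a G-action on ℝP¹. -/

import Mathlib

open Matrix

/-- `SL(2, ℝ)`, the group of 2×2 real matrices of determinant 1. -/
abbrev SL2R := Matrix.SpecialLinearGroup (Fin 2) ℝ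

/-- The Borel subgroup `G` of `SL(2, ℝ)` consisting of the matrices
`[[r, y], [0, r⁻¹]]` with `r ∈ ℝ` nonzero and `y ∈ ℝ`. -/
def BorelSL2 : Subgroup SL2R where
  carrier := {A | ∃ r y : ℝ, r ≠ 0 ∧ (A : Matrix (Fin 2) (Fin 2) ℝ) = !![r, y; 0, r⁻¹]}
  one_mem' := ⟨1, 0, one_ne_zero, by rw [inv_one, Matrix.SpecialLinearGroup.coe_one, Matrix.one_fin_two]⟩
  mul_mem' := by
    rintro A B ⟨r, y, hr, hA⟩ ⟨r', y', hr', hB⟩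
    refine ⟨r * r', r * y' + y * r'⁻¹, mul_ne_zero hr hr', ?_⟩
    rw [Matrix.SpecialLinearGroup.coe_mul, hA, hB, Matrix.mul_fin_two, mul_inv]
    ext i j
    fin_cases i <;> fin_cases j <;> norm_num
  inv_mem' := by
    rintro A ⟨r, y, hr, hA⟩
    refine ⟨r⁻¹, -y, inv_ne_zero hr, ?_⟩
    rw [Matrix.SpecialLinearGroup.coe_inv, hA, Matrix.adjugate_fin_two, inv_inv]
    ext i j
    fin_cases i <;> fin_cases j <;> norm_num

/-- The real projective line `ℝP¹`: the projectivization of `ℝ²`. -/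
abbrev RP1 := Projectivization ℝ (ℝ × ℝ)

section PsiAux

/-- The linear endomorphism of `ℝ²` attached to a matrix `A` (with parameter `s`). -/
def psiLin (s : ℝ) (A : Matrix (Fin 2) (Fin 2) ℝ) : Module.End ℝ (ℝ × ℝ) where
  toFun p := (A 0 0 * p.1 + s * A 0 1 * p.2, A 1 1 * p.2)
  map_add' p q := by refine Prod.ext ?_ ?_ <;> simp <;> ring
  map_smul' c p := by refine Prod.ext ?_ ?_ <;> simp <;> ring

lemma psiLin_apply (s : ℝ) (A : Matrix (Fin 2) (Fin 2) ℝ) (p : ℝ × ℝ) :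
    psiLin s A p = (A 0 0 * p.1 + s * A 0 1 * p.2, A 1 1 * p.2) := rfl

lemma mk_congr {a b : ℝ × ℝ} (h : a = b) (ha : a ≠ 0) (hb : b ≠ 0) :
    Projectivization.mk ℝ a ha = Projectivization.mk ℝ b hb := by subst h; rfl

lemma unit_inj (u : (Module.End ℝ (ℝ × ℝ))ˣ) :
    Function.Injective (u : Module.End ℝ (ℝ × ℝ)) :=
  Function.LeftInverse.injective (g := (↑u⁻¹ : Module.End ℝ (ℝ × ℝ))) fun x => by
    rw [← Module.End.mul_apply, u.inv_mul]; rfl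

/-- `psiLin`, as a monoid homomorphism from the Borel subgroup to `End ℝ (ℝ²)`. -/
def psiEndHom (s : ℝ) : BorelSL2 →* Module.End ℝ (ℝ × ℝ) where
  toFun g := psiLin s ((g : SL2R) : Matrix (Fin 2) (Fin 2) ℝ)
  map_one' := by
    ext p <;>
      simp [psiLin_apply, Matrix.SpecialLinearGroup.coe_one]
  map_mul' g h := by
    obtain ⟨r, y, hr, hA⟩ := g.2
    obtain ⟨r', y', hr', hB⟩ := h.2
    have hAB : (((g * h : BorelSL2) : SL2R) : Matrix (Fin 2) (Fin 2) ℝ)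
        = !![r, y; 0, r⁻¹] * !![r', y'; 0, r'⁻¹] := by
      rw [← hA, ← hB, ← Matrix.SpecialLinearGroup.coe_mul]; rfl
    ext p <;>
      simp [psiLin_apply, Module.End.mul_apply, hAB, hA, hB, Matrix.mul_fin_two] <;> ring

/-- The permutation of `ℝP¹` induced by a unit of `End ℝ (ℝ²)`, as a monoid hom. -/
noncomputable def permHom : (Module.End ℝ (ℝ × ℝ))ˣ →* Equiv.Perm RP1 where
  toFun u :=
    { toFun := Projectivization.map (u : Module.End ℝ (ℝ × ℝ)) (unit_inj u)
      invFun := Projectivization.map ((u⁻¹ : (Module.End ℝ (ℝ × ℝ))ˣ) : Module.End ℝ (ℝ × ℝ))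
        (unit_inj u⁻¹)
      left_inv := fun x => by
        induction x using Projectivization.ind with
        | h v hv =>
          rw [Projectivization.map_mk, Projectivization.map_mk]
          exact mk_congr (by rw [← Module.End.mul_apply, u.inv_mul]; rfl) _ _
      right_inv := fun x => by
        induction x using Projectivization.ind with
        | h v hv =>
          rw [Projectivization.map_mk, Projectivization.map_mk]
          exact mk_congr (by rw [← Module.End.mul_apply, u.mul_inv]; rfl) _ _ }
  map_one' := by
    ext x
    induction x using Projectivization.ind with
    | h v hv =>
      simp only [Equiv.coe_fn_mk, Projectivization.map_mk, Equiv.Perm.coe_one, id_eq]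
      exact mk_congr rfl _ _
  map_mul' u v := by
    ext x
    induction x using Projectivization.ind with
    | h w hw =>
      simp only [Equiv.coe_fn_mk, Projectivization.map_mk, Equiv.Perm.coe_mul,
        Function.comp_apply]
      exact mk_congr (by rw [Units.val_mul, Module.End.mul_apply]) _ _

/-- For every real `s`, the assignment `ψ^s(g)([a : b]) = [r·a + s·y·b : r⁻¹·b]`, for
`g = [[r, y], [0, r⁻¹]]` in the Borel subgroup `G` of `SL(2, ℝ)`, is well defined on
the real projective line `ℝP¹` (it is induced by the invertible linear map
`(a, b) ↦ (r·a + s·y·b, r⁻¹·b)` of `ℝ²`), each `ψ^s(g)` is a bijection of `ℝP¹`, and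
`ψ^s : G → Perm(ℝP¹)` is a group homomorphism, i.e. a `G`-action on `ℝP¹`. -/
theorem psi_action (s : ℝ) :
    (∀ r y : ℝ, r ≠ 0 →
      Function.Bijective (fun p : ℝ × ℝ => (r * p.1 + s * y * p.2, r⁻¹ * p.2))) ∧
    ∃ ψ : BorelSL2 →* Equiv.Perm RP1,
      ∀ (g : BorelSL2) (r y : ℝ), r ≠ 0 →
        ((g : SL2R) : Matrix (Fin 2) (Fin 2) ℝ) = !![r, y; 0, r⁻¹] →
        ∀ (a b : ℝ) (hab : (a, b) ≠ (0 : ℝ × ℝ))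
          (hab' : (r * a + s * y * b, r⁻¹ * b) ≠ (0 : ℝ × ℝ)),
          ψ g (Projectivization.mk ℝ (a, b) hab)
            = Projectivization.mk ℝ (r * a + s * y * b, r⁻¹ * b) hab' := by
  constructor
  · intro r y hr
    constructor
    · rintro ⟨a, b⟩ ⟨c, d⟩ h
      simp only [Prod.mk.injEq] at h
      obtain ⟨h1, h2⟩ := h
      have hbd : b = d := mul_left_cancel₀ (inv_ne_zero hr) h2
      subst hbd
      have : a = c := mul_left_cancel₀ hr (by linarith)
      simp [this]
    · rintro ⟨c, d⟩
      refine ⟨(r⁻¹ * (c - s * y * r * d), r * d), ?_⟩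
      simp only [Prod.mk.injEq]
      constructor <;> field_simp <;> ring
  · refine ⟨permHom.comp (psiEndHom s).toHomUnits, ?_⟩
    intro g r y hr hA a b hab hab'
    have h1 : (((psiEndHom s).toHomUnits g : (Module.End ℝ (ℝ × ℝ))ˣ) : Module.End ℝ (ℝ × ℝ))
        = psiLin s !![r, y; 0, r⁻¹] := by
      rw [MonoidHom.coe_toHomUnits]
      show psiLin s _ = _
      rw [hA]
    show Projectivization.map _ (unit_inj _) (Projectivization.mk ℝ (a, b) hab) = _
    rw [Projectivization.map_mk]
    refine mk_congr ?_ _ _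
    simp only [h1, psiLin_apply]
    norm_num
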